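/- Commensurate prior implies an effective borrowing weight representation: in the conjugate normal-mean model where Ȳ_H | μ_H ~ N(μ_H, σ²/n_H) and Ȳ_C | μ_C ~ N(μ_C, σ²/n_C) are independent with known σ² > 0, with flat base prior π(μ_H) ∝ 1 and commensurate link μ_C | μ_H, τ ~ N(μ_H, τ⁻¹) for fixed τ > 0, the posterior mean of μ_C given the data is E[μ_C | D_C, D_H, τ] = (1 − w(τ))Ȳ_C + w(τ)Ȳ_H, where w(τ) = m_eff(τ)/(n_C + m_eff(τ)) with effective historical sample size m_eff(τ) = σ²/(σ²/n_H + τ⁻¹); equivalently w(τ) = λ(τ)n_H/(n_C + λ(τ)n_H) with λ(τ) = m_eff(τ)/n_H = σ²τ/(σ²τ + n_H) ∈ (0,1). -/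

import Mathlib

open MeasureTheory ProbabilityTheory Real

lemma gaussianPDFReal_symm (μ : ℝ) (v : NNReal) (x : ℝ) :
    gaussianPDFReal μ v x = gaussianPDFReal x v μ := by
  unfold gaussianPDFReal
  congr 2
  ring

lemma real_gaussian_mul (a b x p q : ℝ) (hp : 0 < p) (hq : 0 < q) :
    (√(2*π*p))⁻¹ * rexp (-(x-a)^2/(2*p)) * ((√(2*π*q))⁻¹ * rexp (-(x-b)^2/(2*q))) =
    (√(2*π*(p+q)))⁻¹ * rexp (-(b-a)^2/(2*(p+q))) *
      ((√(2*π*(p*q/(p+q))))⁻¹ *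
        rexp (-(x-(q*a+p*b)/(p+q))^2/(2*(p*q/(p+q))))) := by
  have hpq : (0:ℝ) < p + q := by linarith
  conv_lhs => rw [mul_mul_mul_comm, ← mul_inv, ← Real.sqrt_mul (by positivity), ← Real.exp_add]
  conv_rhs => rw [mul_mul_mul_comm, ← mul_inv, ← Real.sqrt_mul (by positivity), ← Real.exp_add]
  congr 1
  · congr 2
    field_simp
  · congr 1
    field_simp
    ring

lemma gaussian_mul (a b : ℝ) (v1 v2 : NNReal) (h1 : v1 ≠ 0) (h2 : v2 ≠ 0) (x : ℝ) :
    gaussianPDFReal a v1 x * gaussianPDFReal b v2 x =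
      gaussianPDFReal a (v1 + v2) b *
        gaussianPDFReal (((v2 : ℝ) * a + (v1 : ℝ) * b) / ((v1 : ℝ) + (v2 : ℝ)))
          (v1 * v2 / (v1 + v2)) x := by
  have hp : (0:ℝ) < v1 := NNReal.coe_pos.mpr (pos_iff_ne_zero.mpr h1)
  have hq : (0:ℝ) < v2 := NNReal.coe_pos.mpr (pos_iff_ne_zero.mpr h2)
  unfold gaussianPDFReal
  push_cast
  exact real_gaussian_mul a b x _ _ hp hq

lemma integral_id_mul_gaussianPDFReal (m : ℝ) (v : NNReal) (hv : v ≠ 0) :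
    ∫ x : ℝ, x * gaussianPDFReal m v x = m := by
  have hvp : (0:ℝ) < v := NNReal.coe_pos.mpr (pos_iff_ne_zero.mpr hv)
  have heq0 : (fun x : ℝ => x * gaussianPDFReal 0 v x)
      = fun x : ℝ => (√(2*π*v))⁻¹ * (x * rexp (-(2*(v:ℝ))⁻¹ * x^2)) := by
    funext x
    unfold gaussianPDFReal
    rw [sub_zero]
    rw [show -x^2/(2*(v:ℝ)) = -(2*(v:ℝ))⁻¹ * x^2 by field_simp]
    ring
  have hint0 : Integrable (fun x : ℝ => x * gaussianPDFReal 0 v x) := by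
    rw [heq0]
    exact (integrable_mul_exp_neg_mul_sq (by positivity)).const_mul _
  have hzero : ∫ x : ℝ, x * gaussianPDFReal 0 v x = 0 := by
    have hodd : ∀ x : ℝ, (-x) * gaussianPDFReal 0 v (-x) = -(x * gaussianPDFReal 0 v x) := by
      intro x
      have : gaussianPDFReal 0 v (-x) = gaussianPDFReal 0 v x := by
        unfold gaussianPDFReal
        congr 2
        ring
      rw [this]; ring
    have h := integral_neg_eq_self (fun x : ℝ => x * gaussianPDFReal 0 v x) volume
    simp_rw [hodd] at h
    rw [integral_neg] at h
    linarith
  calc ∫ x : ℝ, x * gaussianPDFReal m v x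
      = ∫ x : ℝ, (x + m) * gaussianPDFReal m v (x + m) := by
        rw [integral_add_right_eq_self (fun x : ℝ => x * gaussianPDFReal m v x) m]
    _ = ∫ x : ℝ, (x * gaussianPDFReal 0 v x + m * gaussianPDFReal 0 v x) := by
        congr 1; funext x
        rw [gaussianPDFReal_add, sub_self]; ring
    _ = 0 + m * 1 := by
        rw [integral_add hint0 ((integrable_gaussianPDFReal 0 v).const_mul m), hzero,
          integral_const_mul, integral_gaussianPDFReal_eq_one 0 hv]
    _ = m := by ring

/-- **Commensurate prior implies an effective borrowing weight representation.**
In the conjugate normal-mean model where `Ȳ_H | μ_H ~ N(μ_H, σ²/n_H)` and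
`Ȳ_C | μ_C ~ N(μ_C, σ²/n_C)` are independent with known `σ² > 0`, with flat base
prior `π(μ_H) ∝ 1` and commensurate link `μ_C | μ_H, τ ~ N(μ_H, τ⁻¹)` for fixed
`τ > 0`, the posterior mean of `μ_C` — expressed as the ratio of Lebesgue integrals
of the unnormalized posterior density
`f(μ_C) = ∫ φ(Ȳ_H; μ_H, σ²/n_H) φ(Ȳ_C; μ_C, σ²/n_C) φ(μ_C; μ_H, τ⁻¹) dμ_H` —
satisfies `E[μ_C | D_C, D_H, τ] = (1 − w(τ))Ȳ_C + w(τ)Ȳ_H`, where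
`w(τ) = m_eff(τ)/(n_C + m_eff(τ))` with effective historical sample size
`m_eff(τ) = σ²/(σ²/n_H + τ⁻¹)`; equivalently
`w(τ) = λ(τ)n_H/(n_C + λ(τ)n_H)` with
`λ(τ) = m_eff(τ)/n_H = σ²τ/(σ²τ + n_H) ∈ (0,1)`. -/
theorem commensurate_prior_posterior_mean_is_ebw
    (σ2 τ : NNReal) (hσ2 : 0 < σ2) (hτ : 0 < τ)
    (nC nH : ℕ) (hnC : 0 < nC) (hnH : 0 < nH)
    (Ybar_C Ybar_H : ℝ) :
    -- unnormalized posterior density of `μ_C` given the data, flat prior on `μ_H`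
    let f : ℝ → ℝ := fun μC => ∫ μH : ℝ,
      gaussianPDFReal μH (σ2 / (nH : NNReal)) Ybar_H *
      gaussianPDFReal μC (σ2 / (nC : NNReal)) Ybar_C *
      gaussianPDFReal μH τ⁻¹ μC
    -- effective historical sample size `m_eff(τ) = σ²/(σ²/n_H + τ⁻¹)`
    let meff : ℝ := (σ2 : ℝ) / ((σ2 : ℝ) / (nH : ℝ) + ((τ : ℝ))⁻¹)
    -- effective borrowing weight `w(τ)`
    let w : ℝ := meff / ((nC : ℝ) + meff)
    -- implied borrowing parameter `λ(τ)`
    let lamτ : ℝ := meff / (nH : ℝ)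
    -- posterior mean is the EBW combination
    (∫ μC : ℝ, μC * f μC) / (∫ μC : ℝ, f μC) = (1 - w) * Ybar_C + w * Ybar_H ∧
    -- equivalent EBW form of the weight
    w = lamτ * (nH : ℝ) / ((nC : ℝ) + lamτ * (nH : ℝ)) ∧
    lamτ = (σ2 : ℝ) * (τ : ℝ) / ((σ2 : ℝ) * (τ : ℝ) + (nH : ℝ)) ∧
    lamτ ∈ Set.Ioo (0 : ℝ) 1 := by
  intro f meff w lamτ
  -- basic positivity
  have hs : (0:ℝ) < σ2 := hσ2
  have ht : (0:ℝ) < τ := hτ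
  have hc : (0:ℝ) < nC := by exact_mod_cast hnC
  have hh : (0:ℝ) < nH := by exact_mod_cast hnH
  -- NNReal variances
  set vH : NNReal := σ2 / (nH : NNReal) with hvHdef
  set vC : NNReal := σ2 / (nC : NNReal) with hvCdef
  have hvH : vH ≠ 0 := div_ne_zero hσ2.ne' (Nat.cast_ne_zero.mpr hnH.ne')
  have hvC : vC ≠ 0 := div_ne_zero hσ2.ne' (Nat.cast_ne_zero.mpr hnC.ne')
  have hτi : (τ : NNReal)⁻¹ ≠ 0 := inv_ne_zero hτ.ne'
  set vT : NNReal := vH + τ⁻¹ with hvTdef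
  have hvT : vT ≠ 0 := by
    intro hz
    exact hvH (by simpa using (add_eq_zero.mp hz).1)
  have hvCT : vC + vT ≠ 0 := by
    intro hz
    exact hvC (by simpa using (add_eq_zero.mp hz).1)
  set vstar : NNReal := vC * vT / (vC + vT) with hvstardef
  have hvstar : vstar ≠ 0 := div_ne_zero (mul_ne_zero hvC hvT) hvCT
  set K : ℝ := gaussianPDFReal Ybar_C (vC + vT) Ybar_H with hKdef
  have hK : 0 < K := gaussianPDFReal_pos _ _ _ hvCT
  set mstar : ℝ := ((vT : ℝ) * Ybar_C + (vC : ℝ) * Ybar_H) / ((vC : ℝ) + (vT : ℝ))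
    with hmstardef
  -- Step 1 : closed form of f
  have hf : f = fun μC => K * gaussianPDFReal mstar vstar μC := by
    funext μC
    show (∫ μH : ℝ, gaussianPDFReal μH vH Ybar_H * gaussianPDFReal μC vC Ybar_C *
        gaussianPDFReal μH τ⁻¹ μC) = _
    have hinteg : ∀ μH : ℝ,
        gaussianPDFReal μH vH Ybar_H * gaussianPDFReal μC vC Ybar_C *
          gaussianPDFReal μH τ⁻¹ μC
        = (gaussianPDFReal μC vC Ybar_C * gaussianPDFReal Ybar_H vT μC) *
            gaussianPDFReal (((((τ:NNReal)⁻¹ : NNReal) : ℝ) * Ybar_H + (vH : ℝ) * μC)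
              / ((vH : ℝ) + (((τ:NNReal)⁻¹ : NNReal) : ℝ))) (vH * τ⁻¹ / (vH + τ⁻¹)) μH := by
      intro μH
      rw [gaussianPDFReal_symm μH vH Ybar_H, gaussianPDFReal_symm μH τ⁻¹ μC]
      have := gaussian_mul Ybar_H μC vH τ⁻¹ hvH hτi μH
      rw [mul_comm (gaussianPDFReal Ybar_H vH μH) _, mul_right_comm, mul_assoc,
        mul_comm (gaussianPDFReal μC τ⁻¹ μH) _, this]
      rw [gaussianPDFReal_symm Ybar_H vT μC]
      ring
    rw [show (∫ μH : ℝ, gaussianPDFReal μH vH Ybar_H * gaussianPDFReal μC vC Ybar_C *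
        gaussianPDFReal μH τ⁻¹ μC) = ∫ μH : ℝ, (gaussianPDFReal μC vC Ybar_C *
          gaussianPDFReal Ybar_H vT μC) *
            gaussianPDFReal (((((τ:NNReal)⁻¹ : NNReal) : ℝ) * Ybar_H + (vH : ℝ) * μC)
              / ((vH : ℝ) + (((τ:NNReal)⁻¹ : NNReal) : ℝ))) (vH * τ⁻¹ / (vH + τ⁻¹)) μH
      from by exact congrArg _ (funext hinteg)]
    rw [integral_const_mul, integral_gaussianPDFReal_eq_one _
      (div_ne_zero (mul_ne_zero hvH hτi) hvT), mul_one]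
    rw [gaussianPDFReal_symm μC vC Ybar_C]
    exact gaussian_mul Ybar_C Ybar_H vC vT hvC hvT μC
  -- Step 2 : the two integrals
  have hI1 : (∫ μC : ℝ, f μC) = K := by
    rw [hf, integral_const_mul, integral_gaussianPDFReal_eq_one _ hvstar, mul_one]
  have hI2 : (∫ μC : ℝ, μC * f μC) = K * mstar := by
    rw [hf]
    simp_rw [mul_left_comm _ K _]
    rw [integral_const_mul, integral_id_mul_gaussianPDFReal mstar vstar hvstar]
  -- coercions
  have hcoeC : (vC : ℝ) = (σ2 : ℝ) / (nC : ℝ) := by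
    rw [hvCdef]; push_cast; ring
  have hcoeT : (vT : ℝ) = (σ2 : ℝ) / (nH : ℝ) + ((τ : ℝ))⁻¹ := by
    rw [hvTdef, hvHdef]; push_cast; ring
  have hd : (0:ℝ) < (σ2 : ℝ) / (nH : ℝ) + ((τ : ℝ))⁻¹ := by positivity
  have hmeff : (0:ℝ) < meff := by
    show (0:ℝ) < (σ2 : ℝ) / ((σ2 : ℝ) / (nH : ℝ) + ((τ : ℝ))⁻¹)
    positivity
  refine ⟨?_, ?_, ?_, ?_, ?_⟩
  · rw [hI1, hI2, mul_comm K mstar, mul_div_assoc, div_self hK.ne', mul_one]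
    rw [hmstardef, hcoeC, hcoeT]
    show _ = (1 - meff / ((nC:ℝ) + meff)) * Ybar_C + meff / ((nC:ℝ) + meff) * Ybar_H
    have hcm : (0:ℝ) < (nC:ℝ) + meff := by positivity
    show ((((σ2:ℝ)/(nH:ℝ) + ((τ:ℝ))⁻¹) * Ybar_C + (σ2:ℝ)/(nC:ℝ) * Ybar_H)
        / ((σ2:ℝ)/(nC:ℝ) + ((σ2:ℝ)/(nH:ℝ) + ((τ:ℝ))⁻¹))) = _
    rw [show meff = (σ2 : ℝ) / ((σ2 : ℝ) / (nH : ℝ) + ((τ : ℝ))⁻¹) from rfl]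
    field_simp
    ring
  · show meff / ((nC:ℝ) + meff) = meff / (nH:ℝ) * (nH:ℝ) / ((nC:ℝ) + meff / (nH:ℝ) * (nH:ℝ))
    rw [div_mul_cancel₀ _ hh.ne']
  · show meff / (nH:ℝ) = (σ2:ℝ) * (τ:ℝ) / ((σ2:ℝ) * (τ:ℝ) + (nH:ℝ))
    rw [show meff = (σ2 : ℝ) / ((σ2 : ℝ) / (nH : ℝ) + ((τ : ℝ))⁻¹) from rfl]
    rw [div_eq_div_iff (by positivity) (by positivity)]
    field_simp
  · show (0:ℝ) < meff / (nH:ℝ)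
    positivity
  · show meff / (nH:ℝ) < 1
    rw [div_lt_one hh, show meff = (σ2 : ℝ) / ((σ2 : ℝ) / (nH : ℝ) + ((τ : ℝ))⁻¹) from rfl,
        div_lt_iff₀ hd]
    have : (0:ℝ) < (nH:ℝ) * ((τ:ℝ))⁻¹ := by positivity
    calc (σ2:ℝ) = (nH:ℝ) * ((σ2:ℝ)/(nH:ℝ)) := by field_simp
      _ < (nH:ℝ) * ((σ2:ℝ)/(nH:ℝ) + ((τ:ℝ))⁻¹) := by nlinarith
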